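/- Let V be a type of variables with a constraint system (P, N, S), let (x, y) ∈ S, and let M, T : V → ZFSet be such that M models the literals P and N, the pair (M, T) satisfies the Ξ-conditions for (P, N, S), and M y ∉ M v for every v : V. Then for all u, v : V, M u ⊆ M v holds if and only if M_{x,y} u ⊆ M_{x,y} v holds. -/

import Mathlib

/-- `M` models the positive literals `a = b \ c` in `P` and the negative literals
`a ≠ b \ c` in `N`. -/
def ModelsLits {V : Type*} (P N : Finset (V × V × V)) (M : V → ZFSet) : Prop :=
  (∀ t ∈ P, M t.1 = M t.2.1 \ M t.2.2) ∧ (∀ t ∈ N, M t.1 ≠ M t.2.1 \ M t.2.2)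

/-- `M` models the whole constraint system `(P, N, S)`. -/
def ModelsSystem {V : Type*} (P N : Finset (V × V × V)) (S : Finset (V × V))
    (M : V → ZFSet) : Prop :=
  ModelsLits P N M ∧ ∀ p ∈ S, M p.1 = {M p.2}

/-- The pair of assignments `(M, T)` satisfies the Ξ-conditions for the
constraint system `(P, N, S)`. -/
def XiConditions {V : Type*} (S : Finset (V × V)) (M T : V → ZFSet) : Prop :=
  (∀ p ∈ S, ¬ M p.1 ⊆ M p.2) ∧
  (∀ p ∈ S, ∀ q ∈ S, (M p.2 = M q.2 ↔ M p.1 = M q.1)) ∧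
  (∀ p ∈ S, ∀ v : V, M p.1 ∩ M v ≠ ∅ → M p.1 ⊆ M v) ∧
  (∀ p ∈ S, ∀ v : V, M p.1 ∩ M v ≠ ∅ → T p.2 ⊆ T v ∧ T p.2 ≠ T v) ∧
  (∀ u v : V, M u = M v → T u = T v)

open Classical in
/-- The modified assignment `M_{x,y}`. -/
noncomputable def modifyAssign {V : Type*} (M : V → ZFSet) (x y : V) : V → ZFSet :=
  fun v => if M x ∩ M v = ∅ then M v else (M v \ M x) ∪ {M y}

theorem modify_subset_iff {V : Type*} (P N : Finset (V × V × V)) (S : Finset (V × V))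
    (x y : V) (hxy : (x, y) ∈ S) (M T : V → ZFSet)
    (hM : ModelsLits P N M) (hXi : XiConditions S M T)
    (hy : ∀ v : V, M y ∉ M v) :
    ∀ u v : V, M u ⊆ M v ↔ modifyAssign M x y u ⊆ modifyAssign M x y v := by
  obtain ⟨h1, h2, h3, h4, h5⟩ := hXi
  have hx3 : ∀ v : V, M x ∩ M v ≠ ∅ → M x ⊆ M v := fun v => h3 (x, y) hxy v
  have hxmem : ∀ v z, M x ∩ M v = ∅ → z ∈ M x → z ∉ M v := by
    intro v z h hz hv
    have : z ∈ M x ∩ M v := ZFSet.mem_inter.2 ⟨hz, hv⟩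
    rw [h] at this
    exact ZFSet.notMem_empty z this
  have hne : ∀ v : V, M x ∩ M v ≠ ∅ → ∃ z, z ∈ M x := by
    intro v h
    rcases (ZFSet.eq_empty_or_nonempty (M x ∩ M v)).resolve_left h with ⟨z, hz⟩
    exact ⟨z, (ZFSet.mem_inter.1 hz).1⟩
  intro u v
  unfold modifyAssign
  by_cases hu : M x ∩ M u = ∅
  · rw [if_pos hu]
    by_cases hv : M x ∩ M v = ∅
    · rw [if_pos hv]
    · rw [if_neg hv]
      constructor
      · intro h z hz
        exact ZFSet.mem_union.2 (Or.inl (ZFSet.mem_sdiff.2 ⟨h hz,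
          fun hzx => hxmem u z hu hzx hz⟩))
      · intro h z hz
        rcases ZFSet.mem_union.1 (h hz) with h' | h'
        · exact (ZFSet.mem_sdiff.1 h').1
        · exact absurd (ZFSet.mem_singleton.1 h' ▸ hz) (hy u)
  · rw [if_neg hu]
    by_cases hv : M x ∩ M v = ∅
    · rw [if_pos hv]
      constructor
      · intro h
        exfalso
        rcases hne u hu with ⟨z, hz⟩
        exact hxmem v z hv hz (h (hx3 u hu hz))
      · intro h
        exfalso
        exact hy v (h (ZFSet.mem_union.2 (Or.inr (ZFSet.mem_singleton.2 rfl))))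
    · rw [if_neg hv]
      constructor
      · intro h z hz
        rcases ZFSet.mem_union.1 hz with h' | h'
        · rcases ZFSet.mem_sdiff.1 h' with ⟨hzu, hzx⟩
          exact ZFSet.mem_union.2 (Or.inl (ZFSet.mem_sdiff.2 ⟨h hzu, hzx⟩))
        · exact ZFSet.mem_union.2 (Or.inr h')
      · intro h z hz
        by_cases hzx : z ∈ M x
        · exact hx3 v hv hzx
        · have := h (ZFSet.mem_union.2 (Or.inl (ZFSet.mem_sdiff.2 ⟨hz, hzx⟩)))
          rcases ZFSet.mem_union.1 this with h' | h'
          · exact (ZFSet.mem_sdiff.1 h').1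
          · exact absurd (ZFSet.mem_singleton.1 h' ▸ hz) (hy u)
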